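/- Let K ≥ 1, y ∈ {-1,1}, p_1,…,p_K ∈ [0,1], and p̂_1,…,p̂_K ∈ (0,1). Let Z_1,…,Z_K be independent {-1,1}-valued random variables with P(Z_j = y) = p_j. Set w_j = (1/2)·ln(p̂_j/(1−p̂_j)) and x = Σ_{j=1}^K w_j Z_j, and let ŷ be the randomized prediction that, conditionally on Z, equals sign(x) with probability 1 − (1/2)e^{−|x|} and −sign(x) with probability (1/2)e^{−|x|} (internal randomness independent of Z, with sign(0) = 1). Then P(ŷ ≠ y) ≤ (1/2)·Π_{j=1}^K ( p_j·√((1−p̂_j)/p̂_j) + (1−p_j)·√(p̂_j/(1−p̂_j)) ). -/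

import Mathlib

open MeasureTheory ProbabilityTheory

noncomputable section


lemma aux_reindex {Ω ι ι' : Type*} [MeasurableSpace Ω] {μ : Measure Ω}
    {f : ι → Ω → ℝ} (h : iIndepFun f μ)
    (g : ι' → ι) (hg : Function.Injective g) :
    iIndepFun (fun i => f (g i)) μ := by
  classical
  rw [iIndepFun_iff_measure_inter_preimage_eq_mul] at h ⊢
  intro S sets hsets
  have key := h (S.map ⟨g, hg⟩)
    (sets := Function.extend g sets (fun _ => Set.univ)) ?_
  · have h1 : (⋂ i ∈ S.map ⟨g, hg⟩, f i ⁻¹' Function.extend g sets (fun _ => Set.univ) i)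
        = ⋂ i ∈ S, f (g i) ⁻¹' sets i := by
      ext ω
      simp only [Set.mem_iInter, Finset.mem_map, Function.Embedding.coeFn_mk]
      constructor
      · intro hmem i hi
        have := hmem (g i) ⟨i, hi, rfl⟩
        rwa [hg.extend_apply] at this
      · rintro hmem i ⟨i', hi', rfl⟩
        rw [hg.extend_apply]
        exact hmem i' hi'
    have h2 : (∏ i ∈ S.map ⟨g, hg⟩, μ (f i ⁻¹' Function.extend g sets (fun _ => Set.univ) i))
        = ∏ i ∈ S, μ (f (g i) ⁻¹' sets i) := by
      rw [Finset.prod_map]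
      refine Finset.prod_congr rfl fun i _ => ?_
      rw [Function.Embedding.coeFn_mk, hg.extend_apply]
    rw [h1, h2] at key
    exact key
  · intro i hi
    rw [Finset.mem_map] at hi
    obtain ⟨i', hi', rfl⟩ := hi
    simp only [Function.Embedding.coeFn_mk]
    rw [hg.extend_apply]
    exact hsets i' hi'

lemma aux_lintegral_prod {Ω ι : Type*} [MeasurableSpace Ω] {μ : Measure Ω} [IsProbabilityMeasure μ]
    {F : ι → Ω → ENNReal} (h : iIndepFun F μ)
    (hm : ∀ i, Measurable (F i)) (s : Finset ι) :
    ∫⁻ ω, ∏ i ∈ s, F i ω ∂μ = ∏ i ∈ s, ∫⁻ ω, F i ω ∂μ := by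
  classical
  induction s using Finset.induction with
  | empty => simp
  | @insert a s ha ih =>
    rw [Finset.prod_insert ha, ← ih]
    simp_rw [Finset.prod_insert ha]
    have hind := (h.indepFun_finsetProd_of_notMem hm ha).symm
    have hprodmeas : Measurable (∏ j ∈ s, F j) := by
      rw [Finset.prod_fn]
      exact Finset.measurable_prod s (fun i _ => hm i)
    have := lintegral_mul_eq_lintegral_mul_lintegral_of_indepFun (hm a) hprodmeas hind
    simp only [Pi.mul_apply, Finset.prod_apply] at this ⊢
    rw [this]


/-- The sign function with the convention `sgn 0 = 1`. -/
def sgn (x : ℝ) : ℝ := if 0 ≤ x then 1 else -1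

lemma sgn_vals (t : ℝ) : sgn t = 1 ∨ sgn t = -1 := by
  unfold sgn; split <;> simp

lemma sgn_eq_one_iff (t : ℝ) : sgn t = 1 ↔ 0 ≤ t := by
  unfold sgn
  split <;> rename_i h
  · simp [h]
  · simp only [iff_false_intro h]
    norm_num

set_option maxHeartbeats 1600000 in
/-- Let `K ≥ 1`, `y ∈ {-1,1}`, `p_j ∈ [0,1]`, `p̂_j ∈ (0,1)`, and
`Z_1,…,Z_K` independent `{-1,1}`-valued with `P(Z_j = y) = p_j`. Put
`w_j = (1/2)ln(p̂_j/(1−p̂_j))` and `x = ∑_j w_j Z_j`, and let `ŷ` be the randomized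
prediction that, conditionally on `Z`, equals `sign x` with probability
`1 − (1/2)e^{−|x|}` and `−sign x` with probability `(1/2)e^{−|x|}` (internal
randomness `U`, uniform on `[0,1]` and independent of `Z`; `sign 0 = 1`). Then
`P(ŷ ≠ y) ≤ (1/2)·∏_j (p_j √((1−p̂_j)/p̂_j) + (1−p_j) √(p̂_j/(1−p̂_j)))`. -/
theorem stmt4 {Ω : Type*} [MeasurableSpace Ω] (μ : Measure Ω) [IsProbabilityMeasure μ]
    (K : ℕ) (hK : 1 ≤ K) (y : ℝ) (hy : y = 1 ∨ y = -1)
    (p : Fin K → ℝ) (hp : ∀ j, p j ∈ Set.Icc (0:ℝ) 1)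
    (phat : Fin K → ℝ) (hphat : ∀ j, phat j ∈ Set.Ioo (0:ℝ) 1)
    (Z : Fin K → Ω → ℝ) (hZmeas : ∀ j, Measurable (Z j))
    (hZval : ∀ j ω, Z j ω = 1 ∨ Z j ω = -1)
    (U : Ω → ℝ) (hUmeas : Measurable U)
    (hUdist : Measure.map U μ = volume.restrict (Set.Icc (0:ℝ) 1))
    (hIndep : iIndepFun
      (Sum.elim Z (fun _ : Unit => U)) μ)
    (hprob : ∀ j, μ {ω | Z j ω = y} = ENNReal.ofReal (p j))
    (w : Fin K → ℝ) (hw : ∀ j, w j = (1/2) * Real.log (phat j / (1 - phat j)))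
    (x : Ω → ℝ) (hx : ∀ ω, x ω = ∑ j, w j * Z j ω)
    (Yhat : Ω → ℝ)
    (hYhat : ∀ ω, Yhat ω =
      if U ω ≤ (1/2) * Real.exp (-|x ω|) then -sgn (x ω) else sgn (x ω)) :
    μ {ω | Yhat ω ≠ y}
      ≤ ENNReal.ofReal ((1/2) * ∏ j,
          (p j * Real.sqrt ((1 - phat j) / phat j)
            + (1 - p j) * Real.sqrt (phat j / (1 - phat j)))) := by
  classical
  set q : ℝ → ℝ := fun t => (1/2) * Real.exp (-|t|) with hqdef
  have hq_cont : Continuous q := by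
    exact continuous_const.mul (Real.continuous_exp.comp continuous_abs.neg)
  have hy0 : y ≠ 0 := by rcases hy with h|h <;> rw [h] <;> norm_num
  have hsgn_meas : Measurable sgn := by
    unfold sgn
    exact Measurable.ite measurableSet_Ici measurable_const measurable_const
  have hxmeas : Measurable x := by
    have hxf : x = fun ω => ∑ j, w j * Z j ω := funext hx
    rw [hxf]
    exact Finset.measurable_sum _ fun j _ => measurable_const.mul (hZmeas j)
  have hfmeas : ∀ i : Fin K ⊕ Unit, Measurable (Sum.elim Z (fun _ : Unit => U) i) := by
    rintro (j | u)
    · exact hZmeas j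
    · exact hUmeas
  -- independence of x and U
  have hxU : IndepFun x U μ := by
    set S : Finset (Fin K ⊕ Unit) := Finset.univ.map ⟨Sum.inl, Sum.inl_injective⟩ with hSdef
    set T : Finset (Fin K ⊕ Unit) := {Sum.inr ()} with hTdef
    have hST : Disjoint S T := by
      rw [Finset.disjoint_left]
      rintro i hiS hiT
      rw [hSdef, Finset.mem_map] at hiS
      obtain ⟨j, _, rfl⟩ := hiS
      simp [hTdef] at hiT
    have h1 := hIndep.indepFun_finset S T hST hfmeas
    have hmemS : ∀ j : Fin K, (Sum.inl j : Fin K ⊕ Unit) ∈ S := by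
      intro j; rw [hSdef]; simp
    have hmemT : (Sum.inr () : Fin K ⊕ Unit) ∈ T := by rw [hTdef]; simp
    set φ : ((i : S) → ℝ) → ℝ := fun v => ∑ j : Fin K, w j * v ⟨Sum.inl j, hmemS j⟩ with hφdef
    set ψ : ((i : T) → ℝ) → ℝ := fun v => v ⟨Sum.inr (), hmemT⟩ with hψdef
    have hφ : Measurable φ :=
      Finset.measurable_sum _ fun j _ => measurable_const.mul (measurable_pi_apply _)
    have hψ : Measurable ψ := measurable_pi_apply _
    have h2 := h1.comp hφ hψ
    have hxeq : φ ∘ (fun a (i : S) => Sum.elim Z (fun _ : Unit => U) (i : Fin K ⊕ Unit) a) = x := by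
      funext ω
      rw [Function.comp_apply, hφdef, hx ω]
      rfl
    have hUeq : ψ ∘ (fun a (i : T) => Sum.elim Z (fun _ : Unit => U) (i : Fin K ⊕ Unit) a) = U := by
      funext ω; rfl
    rwa [hxeq, hUeq] at h2
  -- the error event as a preimage
  set Sset : Set (ℝ × ℝ) :=
    {pr | if sgn pr.1 = y then pr.2 ≤ q pr.1 else ¬ pr.2 ≤ q pr.1} with hSsetdef
  have hmeasS : MeasurableSet Sset := by
    have hA : MeasurableSet {pr : ℝ × ℝ | sgn pr.1 = y} :=
      (hsgn_meas.comp measurable_fst) (measurableSet_singleton y)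
    have hB : MeasurableSet {pr : ℝ × ℝ | pr.2 ≤ q pr.1} :=
      measurableSet_le measurable_snd (hq_cont.measurable.comp measurable_fst)
    have : Sset = ({pr : ℝ × ℝ | sgn pr.1 = y} ∩ {pr | pr.2 ≤ q pr.1})
        ∪ ({pr : ℝ × ℝ | sgn pr.1 = y}ᶜ ∩ {pr | pr.2 ≤ q pr.1}ᶜ) := by
      ext pr
      by_cases h1 : sgn pr.1 = y <;> by_cases h2 : pr.2 ≤ q pr.1 <;>
        simp [hSsetdef, h1, h2, lt_of_not_ge (α := ℝ)]
    rw [this]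
    exact (hA.inter hB).union (hA.compl.inter hB.compl)
  have hE : {ω | Yhat ω ≠ y} = (fun ω => (x ω, U ω)) ⁻¹' Sset := by
    ext ω
    simp only [Set.mem_setOf_eq, Set.mem_preimage, hSsetdef, hYhat ω]
    have hq' : (1:ℝ)/2 * Real.exp (-|x ω|) = q (x ω) := rfl
    rw [hq']
    by_cases hu : U ω ≤ q (x ω)
    · rw [if_pos hu]
      by_cases hs : sgn (x ω) = y
      · rw [if_pos hs]
        constructor
        · intro _; exact hu
        · intro _
          rw [hs]
          intro hcontra
          exact hy0 (by linarith)
      · rw [if_neg hs]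
        constructor
        · intro hne
          exfalso
          rcases sgn_vals (x ω) with hv|hv <;> rcases hy with hy1|hy1 <;>
            rw [hv, hy1] at hne hs <;> simp_all
        · intro hcon; exact absurd hu hcon
    · rw [if_neg hu]
      by_cases hs : sgn (x ω) = y
      · rw [if_pos hs]
        constructor
        · intro hne; exact absurd hs hne
        · intro h; exact absurd h hu
      · rw [if_neg hs]
        constructor
        · intro _; exact hu
        · intro _; exact hs
  -- rewrite the measure via the product measure
  have hmap : μ.map (fun ω => (x ω, U ω)) = (μ.map x).prod (μ.map U) :=
    (indepFun_iff_map_prod_eq_prod_map_map hxmeas.aemeasurable hUmeas.aemeasurable).mp hxU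
  have hfinU : IsFiniteMeasure (μ.map U) := by
    constructor
    rw [hUdist, Measure.restrict_apply_univ, Real.volume_Icc]
    norm_num
  have hsfU : SFinite (μ.map U) := by infer_instance
  have hμE : μ {ω | Yhat ω ≠ y}
      = ∫⁻ t, (μ.map U) (Prod.mk t ⁻¹' Sset) ∂(μ.map x) := by
    rw [hE, ← Measure.map_apply (hxmeas.prodMk hUmeas) hmeasS, hmap,
      Measure.prod_apply hmeasS]
  -- slice bound
  have hq_pos : ∀ t : ℝ, 0 < q t := fun t => by positivity
  have hq_le : ∀ t : ℝ, q t ≤ 1/2 := by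
    intro t
    rw [hqdef]
    have : Real.exp (-|t|) ≤ 1 := Real.exp_le_one_iff.mpr (by simp [abs_nonneg])
    nlinarith
  have hslice : ∀ t : ℝ,
      (μ.map U) (Prod.mk t ⁻¹' Sset) ≤ ENNReal.ofReal ((1/2) * Real.exp (-(y * t))) := by
    intro t
    rw [hUdist]
    by_cases hs : sgn t = y
    · have hpre : Prod.mk t ⁻¹' Sset = Set.Iic (q t) := by
        ext u; simp [hSsetdef, hs]
      have habs : |t| = y * t := by
        rcases hy with hy1|hy1
        · rw [hy1] at hs ⊢
          rw [sgn_eq_one_iff] at hs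
          rw [abs_of_nonneg hs]; ring
        · rw [hy1] at hs ⊢
          have ht : ¬ (0 ≤ t) := by
            intro h0
            rw [← sgn_eq_one_iff] at h0
            rw [h0] at hs; norm_num at hs
          rw [abs_of_neg (lt_of_not_ge ht)]; ring
      rw [hpre, Measure.restrict_apply measurableSet_Iic]
      have hint : Set.Iic (q t) ∩ Set.Icc (0:ℝ) 1 = Set.Icc 0 (q t) := by
        ext u
        simp only [Set.mem_inter_iff, Set.mem_Iic, Set.mem_Icc]
        constructor
        · rintro ⟨h1, h2, h3⟩; exact ⟨h2, h1⟩
        · rintro ⟨h1, h2⟩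
          exact ⟨h2, h1, le_trans h2 (le_trans (hq_le t) (by norm_num))⟩
      rw [hint, Real.volume_Icc]
      apply ENNReal.ofReal_le_ofReal
      rw [hqdef]
      simp only [sub_zero]
      rw [habs]
    · have hpre : Prod.mk t ⁻¹' Sset = (Set.Iic (q t))ᶜ := by
        ext u; simp [hSsetdef, hs]
      have habs : |t| = -(y * t) := by
        rcases hy with hy1|hy1
        · rw [hy1] at hs ⊢
          rw [sgn_eq_one_iff] at hs
          rw [abs_of_neg (lt_of_not_ge hs)]; ring
        · rw [hy1] at hs ⊢
          have ht : 0 ≤ t := by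
            by_contra h0
            have : sgn t = -1 := by unfold sgn; rw [if_neg h0]
            exact hs this
          rw [abs_of_nonneg ht]; ring
      rw [hpre, Measure.restrict_apply measurableSet_Iic.compl]
      have hint : (Set.Iic (q t))ᶜ ∩ Set.Icc (0:ℝ) 1 = Set.Ioc (q t) 1 := by
        ext u
        simp only [Set.mem_inter_iff, Set.mem_compl_iff, Set.mem_Iic, Set.mem_Icc,
          Set.mem_Ioc, not_le]
        constructor
        · rintro ⟨h1, h2, h3⟩; exact ⟨h1, h3⟩
        · rintro ⟨h1, h2⟩; exact ⟨h1, le_of_lt (lt_of_le_of_lt (le_of_lt (hq_pos t)) h1), h2⟩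
      rw [hint, Real.volume_Ioc]
      apply ENNReal.ofReal_le_ofReal
      have he : Real.exp (-(y*t)) = Real.exp |t| := by rw [habs]
      rw [he, hqdef]
      have h1 : Real.exp |t| * Real.exp (-|t|) = 1 := by
        rw [← Real.exp_add]; simp
      nlinarith [sq_nonneg (Real.exp |t| - 1), Real.exp_pos |t|, Real.exp_pos (-|t|)]
  -- from slices to the exponential moment
  have hgmeas : Measurable fun t : ℝ => ENNReal.ofReal ((1/2) * Real.exp (-(y * t))) := by
    exact ENNReal.measurable_ofReal.comp
      (continuous_const.mul (Real.continuous_exp.comp (continuous_const.mul continuous_id).neg)).measurable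
  have hstep : μ {ω | Yhat ω ≠ y}
      ≤ ∫⁻ ω, ENNReal.ofReal ((1/2) * Real.exp (-(y * x ω))) ∂μ := by
    rw [hμE]
    calc ∫⁻ t, (μ.map U) (Prod.mk t ⁻¹' Sset) ∂(μ.map x)
        ≤ ∫⁻ t, ENNReal.ofReal ((1/2) * Real.exp (-(y * t))) ∂(μ.map x) :=
          lintegral_mono hslice
      _ = _ := lintegral_map hgmeas hxmeas
  -- the product structure
  set F : Fin K → Ω → ENNReal :=
    fun j ω => ENNReal.ofReal (Real.exp (-(y * (w j * Z j ω)))) with hFdef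
  have hfac : ∀ ω, ENNReal.ofReal ((1/2) * Real.exp (-(y * x ω)))
      = ENNReal.ofReal (1/2) * ∏ j, F j ω := by
    intro ω
    rw [ENNReal.ofReal_mul (by norm_num)]
    congr 1
    rw [hx ω, Finset.mul_sum, ← Finset.sum_neg_distrib, Real.exp_sum,
      ENNReal.ofReal_prod_of_nonneg (fun j _ => (Real.exp_pos _).le)]
  have hZindep : iIndepFun Z μ := by
    have := aux_reindex hIndep Sum.inl Sum.inl_injective
    exact this
  have hFindep : iIndepFun F μ := by
    have := hZindep.comp (fun j r => ENNReal.ofReal (Real.exp (-(y * (w j * r)))))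
      (fun j => ENNReal.measurable_ofReal.comp
        (Real.continuous_exp.comp (continuous_const.mul
          (continuous_const.mul continuous_id)).neg).measurable)
    exact this
  have hFmeas : ∀ j, Measurable (F j) := fun j =>
    ENNReal.measurable_ofReal.comp
      ((Real.continuous_exp.measurable).comp
        ((measurable_const.mul ((hZmeas j).const_mul (w j))).neg))
  have hprodint : ∫⁻ ω, ∏ j, F j ω ∂μ = ∏ j, ∫⁻ ω, F j ω ∂μ :=
    aux_lintegral_prod hFindep hFmeas Finset.univ
  -- compute each factor
  have hfacj : ∀ j, ∫⁻ ω, F j ω ∂μ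
      = ENNReal.ofReal (p j * Real.sqrt ((1 - phat j) / phat j)
          + (1 - p j) * Real.sqrt (phat j / (1 - phat j))) := by
    intro j
    obtain ⟨hph0, hph1⟩ := hphat j
    obtain ⟨hp0, hp1⟩ := hp j
    have hph1' : (0:ℝ) < 1 - phat j := by linarith
    have hs_pos : 0 < (1 - phat j) / phat j := div_pos hph1' hph0
    have hr_pos : 0 < phat j / (1 - phat j) := div_pos hph0 hph1'
    have hexp_neg : Real.exp (-(w j)) = Real.sqrt ((1 - phat j) / phat j) := by
      have h1 : Real.exp (-(w j))
          = Real.exp (Real.log ((1 - phat j) / phat j) * (1/2)) := by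
        congr 1
        have hinv : (1 - phat j) / phat j = (phat j / (1 - phat j))⁻¹ := by
          rw [inv_div]
        rw [hw j, hinv, Real.log_inv]
        ring
      rw [h1, ← Real.rpow_def_of_pos hs_pos, Real.sqrt_eq_rpow]
    have hexp_pos : Real.exp (w j) = Real.sqrt (phat j / (1 - phat j)) := by
      have h1 : Real.exp (w j)
          = Real.exp (Real.log (phat j / (1 - phat j)) * (1/2)) := by
        congr 1
        rw [hw j]; ring
      rw [h1, ← Real.rpow_def_of_pos hr_pos, Real.sqrt_eq_rpow]
    set A := {ω | Z j ω = y} with hAdef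
    have hAmeas : MeasurableSet A := (hZmeas j) (measurableSet_singleton y)
    have h1 : ∀ ω ∈ A, F j ω = ENNReal.ofReal (Real.exp (-(w j))) := by
      intro ω hω
      have hz : Z j ω = y := hω
      have hyy : y * (w j * Z j ω) = w j := by
        rw [hz]; rcases hy with h|h <;> rw [h] <;> ring
      simp only [hFdef]
      rw [hyy]
    have h2 : ∀ ω ∈ Aᶜ, F j ω = ENNReal.ofReal (Real.exp (w j)) := by
      intro ω hω
      have hne : ¬ Z j ω = y := hω
      have hz : Z j ω = -y := by
        rcases hZval j ω with h|h <;> rcases hy with h'|h' <;>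
          rw [h, h'] at hne ⊢ <;> simp_all
      have hyy : y * (w j * Z j ω) = -(w j) := by
        rw [hz]; rcases hy with h|h <;> rw [h] <;> ring
      simp only [hFdef]
      rw [hyy, neg_neg]
    have hμA : μ A = ENNReal.ofReal (p j) := hprob j
    have hμAc : μ Aᶜ = ENNReal.ofReal (1 - p j) := by
      rw [measure_compl hAmeas (measure_ne_top μ A), hμA, measure_univ,
        ENNReal.ofReal_sub _ hp0, ENNReal.ofReal_one]
    have hIA : ∫⁻ ω in A, F j ω ∂μ
        = ENNReal.ofReal (Real.exp (-(w j))) * ENNReal.ofReal (p j) := by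
      rw [setLIntegral_congr_fun hAmeas h1, setLIntegral_const, hμA]
    have hIAc : ∫⁻ ω in Aᶜ, F j ω ∂μ
        = ENNReal.ofReal (Real.exp (w j)) * ENNReal.ofReal (1 - p j) := by
      rw [setLIntegral_congr_fun hAmeas.compl h2, setLIntegral_const, hμAc]
    rw [← lintegral_add_compl (F j) hAmeas, hIA, hIAc,
      ← ENNReal.ofReal_mul (Real.exp_pos _).le, ← ENNReal.ofReal_mul (Real.exp_pos _).le,
      ← ENNReal.ofReal_add (mul_nonneg (Real.exp_pos _).le hp0)
        (mul_nonneg (Real.exp_pos _).le (by linarith)),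
      hexp_neg, hexp_pos]
    congr 1
    ring
  -- final assembly
  have ha_nonneg : ∀ j : Fin K, 0 ≤ p j * Real.sqrt ((1 - phat j) / phat j)
      + (1 - p j) * Real.sqrt (phat j / (1 - phat j)) := by
    intro j
    obtain ⟨hp0, hp1⟩ := hp j
    have := Real.sqrt_nonneg ((1 - phat j) / phat j)
    have := Real.sqrt_nonneg (phat j / (1 - phat j))
    nlinarith
  calc μ {ω | Yhat ω ≠ y}
      ≤ ∫⁻ ω, ENNReal.ofReal ((1/2) * Real.exp (-(y * x ω))) ∂μ := hstep
    _ = ENNReal.ofReal (1/2) * ∫⁻ ω, ∏ j, F j ω ∂μ := by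
        simp_rw [hfac]
        rw [lintegral_const_mul _ (Finset.measurable_prod _ (fun j _ => hFmeas j))]
    _ = ENNReal.ofReal (1/2) * ∏ j, ∫⁻ ω, F j ω ∂μ := by rw [hprodint]
    _ = ENNReal.ofReal (1/2) * ∏ j, ENNReal.ofReal
          (p j * Real.sqrt ((1 - phat j) / phat j)
            + (1 - p j) * Real.sqrt (phat j / (1 - phat j))) := by
        congr 1
        exact Finset.prod_congr rfl fun j _ => hfacj j
    _ = ENNReal.ofReal ((1/2) * ∏ j,
          (p j * Real.sqrt ((1 - phat j) / phat j)
            + (1 - p j) * Real.sqrt (phat j / (1 - phat j)))) := by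
        rw [← ENNReal.ofReal_prod_of_nonneg (fun j _ => ha_nonneg j),
          ← ENNReal.ofReal_mul (by norm_num)]

end
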